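/- Let M ⊆ ℝ^{n+1} be a Lebesgue-measurable set that is directed with respect to v ∈ ℝ^{n+1} \ {0}. If x ∈ ℝ^{n+1} and t > 0 are such that x ∈ ∂M and x + t·v ∈ ∂M (measure-theoretic boundary), then x + τ·v ∈ ∂M for all 0 ≤ τ ≤ t. -/

import Mathlib

open MeasureTheory Metric

/-- Approximate density of a set `M` at `x` with respect to radius `ρ`. -/
noncomputable def approxDensity {d : ℕ} (M : Set (EuclideanSpace ℝ (Fin d))) (ρ : ℝ)
    (x : EuclideanSpace ℝ (Fin d)) : ENNReal :=
  volume (M ∩ ball x ρ) / volume (ball x ρ)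

/-- `M` is directed with respect to `v`. -/
def DirectedWrt {d : ℕ} (M : Set (EuclideanSpace ℝ (Fin d)))
    (v : EuclideanSpace ℝ (Fin d)) : Prop :=
  ∀ x : EuclideanSpace ℝ (Fin d), ∀ ρ : ℝ, 0 < ρ →
    Antitone (fun t : ℝ => approxDensity M ρ (x + t • v))

/-- Measure-theoretic interior. -/
def mInterior {d : ℕ} (M : Set (EuclideanSpace ℝ (Fin d))) :
    Set (EuclideanSpace ℝ (Fin d)) :=
  {x | ∃ ρ > (0 : ℝ), volume (ball x ρ \ M) = 0}

/-- Measure-theoretic exterior. -/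
def mExterior {d : ℕ} (M : Set (EuclideanSpace ℝ (Fin d))) :
    Set (EuclideanSpace ℝ (Fin d)) :=
  {x | ∃ ρ > (0 : ℝ), volume (M ∩ ball x ρ) = 0}

/-- Measure-theoretic boundary. -/
def mBoundary {d : ℕ} (M : Set (EuclideanSpace ℝ (Fin d))) :
    Set (EuclideanSpace ℝ (Fin d)) :=
  (mInterior M ∪ mExterior M)ᶜ

lemma aux_density_one_iff {d : ℕ} {M : Set (EuclideanSpace ℝ (Fin d))}
    (hM : MeasurableSet M) {ρ : ℝ} (hρ : 0 < ρ) (y : EuclideanSpace ℝ (Fin d)) :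
    1 ≤ approxDensity M ρ y ↔ volume (ball y ρ \ M) = 0 := by
  have hne : volume (ball y ρ) ≠ 0 := (measure_ball_pos volume y hρ).ne'
  have htop : volume (ball y ρ) ≠ ⊤ := measure_ball_lt_top.ne
  have hsum : volume (ball y ρ ∩ M) + volume (ball y ρ \ M) = volume (ball y ρ) :=
    measure_inter_add_diff _ hM
  constructor
  · intro h
    have h1 : volume (ball y ρ) ≤ volume (M ∩ ball y ρ) := by
      have := (ENNReal.le_div_iff_mul_le (Or.inl hne) (Or.inl htop)).mp h
      simpa using this
    have h2 : volume (M ∩ ball y ρ) ≤ volume (ball y ρ) :=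
      measure_mono Set.inter_subset_right
    have heq : volume (ball y ρ ∩ M) = volume (ball y ρ) := by
      rw [Set.inter_comm]; exact le_antisymm h2 h1
    have : volume (ball y ρ ∩ M) + volume (ball y ρ \ M)
        = volume (ball y ρ ∩ M) + 0 := by rw [hsum, add_zero, heq]
    exact (ENNReal.add_right_inj (heq ▸ htop)).mp this
  · intro h
    have h1 : volume (M ∩ ball y ρ) = volume (ball y ρ) := by
      rw [Set.inter_comm, ← hsum, h, add_zero]
    rw [approxDensity, h1, ENNReal.div_self hne htop]

theorem boundary_segment_of_directed {n : ℕ}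
    (M : Set (EuclideanSpace ℝ (Fin (n + 1)))) (hM : MeasurableSet M)
    (v : EuclideanSpace ℝ (Fin (n + 1))) (hv : v ≠ 0)
    (hdir : DirectedWrt M v)
    (x : EuclideanSpace ℝ (Fin (n + 1))) (t : ℝ) (ht : 0 < t)
    (hx : x ∈ mBoundary M) (hxt : x + t • v ∈ mBoundary M) :
    ∀ τ : ℝ, 0 ≤ τ → τ ≤ t → x + τ • v ∈ mBoundary M := by
  intro τ hτ0 hτt
  simp only [mBoundary, Set.mem_compl_iff, Set.mem_union] at hx hxt ⊢
  rintro (⟨ρ, hρ, h0⟩ | ⟨ρ, hρ, h0⟩)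
  · -- x + τ • v ∈ mInterior ⇒ x ∈ mInterior, contradiction with hx
    refine hx (Or.inl ⟨ρ, hρ, ?_⟩)
    have h1 : (1 : ENNReal) ≤ approxDensity M ρ (x + τ • v) :=
      (aux_density_one_iff hM hρ _).mpr h0
    have h2 : approxDensity M ρ (x + τ • v) ≤ approxDensity M ρ (x + (0 : ℝ) • v) :=
      hdir x ρ hρ hτ0
    have h3 : (1 : ENNReal) ≤ approxDensity M ρ x := by
      simpa using h1.trans h2
    exact (aux_density_one_iff hM hρ x).mp h3
  · -- x + τ • v ∈ mExterior ⇒ x + t • v ∈ mExterior, contradiction with hxt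
    refine hxt (Or.inr ⟨ρ, hρ, ?_⟩)
    have hne : volume (ball (x + τ • v) ρ) ≠ 0 := (measure_ball_pos volume _ hρ).ne'
    have h1 : approxDensity M ρ (x + τ • v) = 0 := by
      rw [approxDensity, h0, ENNReal.zero_div]
    have h2 : approxDensity M ρ (x + t • v) ≤ approxDensity M ρ (x + τ • v) :=
      hdir x ρ hρ hτt
    have h3 : approxDensity M ρ (x + t • v) = 0 := le_antisymm (h1 ▸ h2) zero_le
    rw [approxDensity, ENNReal.div_eq_zero_iff] at h3
    rcases h3 with h3 | h3
    · exact h3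
    · exact absurd h3 measure_ball_lt_top.ne
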